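/- For every prime p > 3: ∑_{j=1}^{p-1} q^j/[j]_q² ≡ -((p²-1)/12)(1-q)² (mod [p]_q), in the localization of ℚ[q] at [p]_q. -/

import Mathlib

open Polynomial Finset

/-- `[n]_q = 1 + q + ⋯ + q^(n-1)` as a polynomial in `ℚ[q]`. -/
noncomputable def qnum (n : ℕ) : ℚ[X] := ∑ i ∈ Finset.range n, X ^ i

/-- The embedding of `ℚ[q]` into the field of rational functions `ℚ(q)`. -/
noncomputable def Φ : ℚ[X] →+* RatFunc ℚ := algebraMap _ _

/-- `ModPow p k x` says that `x` lies in the ideal generated by `[p]_q ^ k` in the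
localization of `ℚ[q]` at the polynomials coprime to the irreducible polynomial
`[p]_q`: that is, `x = [p]_q ^ k · a / b` with `[p]_q ∤ b`. -/
def ModPow (p k : ℕ) (x : RatFunc ℚ) : Prop :=
  ∃ a b : ℚ[X], ¬ (qnum p ∣ b) ∧ x * Φ b = Φ (qnum p ^ k * a)

lemma qss_geom_root (p : ℕ) (ζ : ℂ) (hζ : IsPrimitiveRoot ζ p) (m : ℕ) :
    ∑ j ∈ range p, ζ^(m*j) = if p ∣ m then (p:ℂ) else 0 := by
  have hsum : ∀ j, ζ^(m*j) = (ζ^m)^j := fun j => by rw [pow_mul]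
  simp only [hsum]
  by_cases h : p ∣ m
  · have : ζ^m = 1 := (hζ.pow_eq_one_iff_dvd m).mpr h
    simp [this, h]
  · have hne : ζ^m ≠ 1 := fun hc => h ((hζ.pow_eq_one_iff_dvd m).mp hc)
    have hpow : (ζ^m)^p = 1 := by
      rw [← pow_mul, mul_comm, pow_mul, hζ.pow_eq_one, one_pow]
    rw [geom_sum_eq hne, hpow]
    simp [h]

lemma qss_range_eq_insert (p : ℕ) (hp : 0 < p) : range p = insert 0 (Icc 1 (p-1)) := by
  ext x; simp [Finset.mem_range, Finset.mem_Icc]; omega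

lemma qss_geom_root_Icc (p : ℕ) (hp : 0 < p) (ζ : ℂ) (hζ : IsPrimitiveRoot ζ p) (m : ℕ) :
    ∑ j ∈ Icc 1 (p-1), ζ^(m*j) = (if p ∣ m then (p:ℂ) else 0) - 1 := by
  have h0 : (0:ℕ) ∉ Icc 1 (p-1) := by simp
  have := qss_geom_root p ζ hζ m
  rw [qss_range_eq_insert p hp, Finset.sum_insert h0] at this
  simp only [mul_zero, pow_zero] at this
  rw [eq_sub_iff_add_eq, add_comm]; exact this

lemma qss_sum1 (n : ℕ) : ∑ k ∈ Finset.range n, ((k:ℂ)+1) = n*(n+1)/2 := by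
  induction n with
  | zero => simp
  | succ n ih => rw [Finset.sum_range_succ, ih]; push_cast; ring

lemma qss_sumB (n : ℕ) : ∑ k ∈ Finset.range n, ((k:ℂ)+1)*((n:ℂ)-(k:ℂ)) = n*(n+1)*(n+2)/6 := by
  induction n with
  | zero => simp
  | succ n ih =>
    have h : ∑ k ∈ range (n+1), ((k:ℂ)+1)*(((n+1:ℕ):ℂ)-(k:ℂ))
        = (∑ k ∈ range (n+1), ((k:ℂ)+1)*((n:ℂ)-(k:ℂ))) + ∑ k ∈ range (n+1), ((k:ℂ)+1) := by
      rw [← Finset.sum_add_distrib]; apply Finset.sum_congr rfl; intro k _; push_cast; ring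
    rw [h, Finset.sum_range_succ _ n, ih, qss_sum1 (n+1)]
    push_cast; ring

lemma qss_tel (x : ℂ) (n : ℕ) :
    (1-x) * ∑ k ∈ range n, ((k:ℂ)+1)*x^k = (∑ k ∈ range n, x^k) - n * x^n := by
  induction n with
  | zero => simp
  | succ n ih =>
    rw [Finset.sum_range_succ, Finset.sum_range_succ _ n, mul_add, ih]
    push_cast; ring

lemma qss_core (p : ℕ) (hp : 1 < p) (ζ : ℂ) (hζ : IsPrimitiveRoot ζ p) :
    ∑ j ∈ Icc 1 (p-1), ζ^j/(1-ζ^j)^2 = -((p:ℂ)^2-1)/12 := by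
  have hp0 : (0:ℕ) < p := by omega
  have hpC : (p:ℂ) ≠ 0 := Nat.cast_ne_zero.mpr (by omega)
  set A : ℕ → ℂ := fun j => ∑ k ∈ range p, ((k:ℂ)+1)*(ζ^j)^k with hA_def
  have hndvd : ∀ j ∈ Icc 1 (p-1), ¬ p ∣ j := by
    intro j hj; rw [Finset.mem_Icc] at hj
    intro hd
    have := Nat.le_of_dvd (by omega) hd
    omega
  have hζj : ∀ j ∈ Icc 1 (p-1), (1 - ζ^j) ≠ 0 := by
    intro j hj
    have : ζ^j ≠ 1 := fun hc => hndvd j hj ((hζ.pow_eq_one_iff_dvd j).mp hc)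
    intro hc; apply this; linear_combination -hc
  have hA : ∀ j ∈ Icc 1 (p-1), (1-ζ^j) * A j = -(p:ℂ) := by
    intro j hj
    have h1 : ∑ k ∈ range p, (ζ^j)^k = 0 := by
      have := qss_geom_root p ζ hζ j
      rw [if_neg (hndvd j hj)] at this
      simpa [pow_mul] using this
    have h2 : (ζ^j)^p = 1 := by rw [← pow_mul, mul_comm, pow_mul, hζ.pow_eq_one, one_pow]
    rw [hA_def]; simp only
    rw [qss_tel (ζ^j) p, h1, h2]; ring
  have step1 : ∀ j ∈ Icc 1 (p-1), ζ^j/(1-ζ^j)^2 = ζ^j * (A j)^2 / (p:ℂ)^2 := by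
    intro j hj
    have h2 : (1-ζ^j)^2*(A j)^2 = (p:ℂ)^2 := by
      have := hA j hj; linear_combination ((1-ζ^j)*(A j) - (p:ℂ)) * this
    rw [div_eq_div_iff (pow_ne_zero 2 (hζj j hj)) (pow_ne_zero 2 hpC)]
    linear_combination -ζ^j * h2
  rw [Finset.sum_congr rfl step1]
  have hexp : ∀ j ∈ Icc 1 (p-1), ζ^j * (A j)^2
      = ∑ k ∈ range p, ∑ l ∈ range p, ((k:ℂ)+1)*((l:ℂ)+1)*ζ^((k+l+1)*j) := by
    intro j hj
    rw [hA_def]; simp only [sq]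
    rw [Finset.sum_mul_sum, Finset.mul_sum]
    apply Finset.sum_congr rfl; intro k _
    rw [Finset.mul_sum]
    apply Finset.sum_congr rfl; intro l _
    have : ζ^((k+l+1)*j) = ζ^j * ((ζ^j)^k * (ζ^j)^l) := by
      rw [← pow_mul, ← pow_mul, ← pow_add, ← pow_add]; ring_nf
    rw [this]; ring
  have key : ∑ j ∈ Icc 1 (p-1), ζ^j * (A j)^2
      = (p:ℂ) * ((p:ℂ)*((p:ℂ)+1)*((p:ℂ)+2)/6) - ((p:ℂ)*((p:ℂ)+1)/2)^2 := by
    rw [Finset.sum_congr rfl hexp, Finset.sum_comm]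
    have swap2 : ∀ k ∈ range p, ∑ j ∈ Icc 1 (p-1), ∑ l ∈ range p, ((k:ℂ)+1)*((l:ℂ)+1)*ζ^((k+l+1)*j)
        = ∑ l ∈ range p, ((if p ∣ (k+l+1) then (p:ℂ) else 0) - 1) * (((k:ℂ)+1)*((l:ℂ)+1)) := by
      intro k _
      rw [Finset.sum_comm]
      apply Finset.sum_congr rfl; intro l _
      rw [← qss_geom_root_Icc p hp0 ζ hζ (k+l+1), Finset.sum_mul]
      apply Finset.sum_congr rfl; intro j _; ring
    rw [Finset.sum_congr rfl swap2]
    have split : ∀ k ∈ range p, ∑ l ∈ range p, ((if p ∣ (k+l+1) then (p:ℂ) else 0) - 1) * (((k:ℂ)+1)*((l:ℂ)+1))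
        = (∑ l ∈ range p, (if p ∣ (k+l+1) then (p:ℂ)*(((k:ℂ)+1)*((l:ℂ)+1)) else 0))
          - ∑ l ∈ range p, ((k:ℂ)+1)*((l:ℂ)+1) := by
      intro k _
      rw [← Finset.sum_sub_distrib]
      apply Finset.sum_congr rfl; intro l _
      by_cases h : p ∣ (k+l+1) <;> simp [h] <;> ring
    rw [Finset.sum_congr rfl split, Finset.sum_sub_distrib]
    have part1 : ∀ k ∈ range p, ∑ l ∈ range p, (if p ∣ (k+l+1) then (p:ℂ)*(((k:ℂ)+1)*((l:ℂ)+1)) else 0)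
        = (p:ℂ) * (((k:ℂ)+1)*((p:ℂ)-(k:ℂ))) := by
      intro k hk
      rw [Finset.mem_range] at hk
      rw [Finset.sum_eq_single_of_mem (p-1-k) (by rw [Finset.mem_range]; omega)]
      · rw [if_pos (by exact ⟨1, by omega⟩)]
        have : ((p-1-k : ℕ):ℂ) = (p:ℂ) - 1 - (k:ℂ) := by
          have h1 : ((p-1-k:ℕ):ℂ) = ((p - (1+k) : ℕ):ℂ) := by norm_num [Nat.sub_sub]
          rw [h1, Nat.cast_sub (by omega)]; push_cast; ring
        rw [this]; ring
      · intro b hb hbne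
        rw [Finset.mem_range] at hb
        rw [if_neg]
        intro hdvd
        have := Nat.eq_of_dvd_of_lt_two_mul (by omega) hdvd (by omega)
        omega
    rw [Finset.sum_congr rfl part1, ← Finset.mul_sum, qss_sumB p]
    have part2 : ∑ k ∈ range p, ∑ l ∈ range p, ((k:ℂ)+1)*((l:ℂ)+1)
        = ((p:ℂ)*((p:ℂ)+1)/2)^2 := by
      rw [← Finset.sum_mul_sum, qss_sum1 p]; ring
    rw [part2]
  rw [← Finset.sum_div, key]
  field_simp
  ring

/-- For a prime `p > 3`,
`∑_{j=1}^{p-1} q^j/[j]_q² ≡ -((p²-1)/12)(1-q)² (mod [p]_q)` in the localization of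
`ℚ[q]` at `[p]_q`. -/
theorem q_sum_qj_sq (p : ℕ) (hp : p.Prime) (h3 : 3 < p) :
    ModPow p 1 ((∑ j ∈ Finset.Icc 1 (p-1), Φ (X^j) / (Φ (qnum j))^2)
      + Φ ((((p^2-1)/12 : ℕ) : ℚ[X]) * (1 - X)^2)) := by
  classical
  haveI : Fact p.Prime := ⟨hp⟩
  have hp1 : 1 < p := by omega
  -- primitive root
  set ζ : ℂ := Complex.exp (2 * Real.pi * Complex.I / p) with hζdef
  have hζ : IsPrimitiveRoot ζ p := Complex.isPrimitiveRoot_exp p (by omega)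
  have hζ1 : ζ ≠ 1 := hζ.ne_one hp1
  have hζ1' : ζ - 1 ≠ 0 := sub_ne_zero.mpr hζ1
  set e : ℕ → ℂ := fun k => aeval ζ (qnum k) with he_def
  have hE : ∀ k, e k = ∑ i ∈ range k, ζ^i := by
    intro k; rw [he_def]; simp [qnum, map_sum]
  have hζk : ∀ k ∈ Icc 1 (p-1), ζ^k - 1 ≠ 0 := by
    intro k hk
    rw [Finset.mem_Icc] at hk
    rw [sub_ne_zero]
    intro hc
    have := (hζ.pow_eq_one_iff_dvd k).mp hc
    have := Nat.le_of_dvd (by omega) this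
    omega
  have hEval : ∀ k ∈ Icc 1 (p-1), e k = (ζ^k - 1)/(ζ - 1) := by
    intro k hk; rw [hE k, geom_sum_eq hζ1]
  have hEne : ∀ k ∈ Icc 1 (p-1), e k ≠ 0 := by
    intro k hk; rw [hEval k hk]
    exact div_ne_zero (hζk k hk) hζ1'
  -- qnum p is the minimal polynomial of ζ
  have hcyc : qnum p = cyclotomic p ℚ := by
    rw [cyclotomic_prime ℚ p]; rfl
  have hmin : qnum p = minpoly ℚ ζ := by
    rw [hcyc, cyclotomic_eq_minpoly_rat hζ (by omega)]
  -- 12 divides p^2 - 1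
  have h2 : ¬ (2 ∣ p) := fun h => by
    rcases (Nat.Prime.eq_one_or_self_of_dvd hp 2 h) with h' | h' <;> omega
  have h3' : ¬ (3 ∣ p) := fun h => by
    rcases (Nat.Prime.eq_one_or_self_of_dvd hp 3 h) with h' | h' <;> omega
  have hr : p % 12 = 1 ∨ p % 12 = 5 ∨ p % 12 = 7 ∨ p % 12 = 11 := by omega
  have hsq : p^2 % 12 = 1 := by
    rw [Nat.pow_mod]
    rcases hr with h | h | h | h <;> rw [h] <;> rfl
  have h12 : 12 ∣ p^2 - 1 := by
    have : 1 ≤ p^2 := Nat.one_le_pow _ _ (by omega)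
    omega
  obtain ⟨t, ht⟩ := h12
  have htq : ((p^2-1)/12 : ℕ) = t := by omega
  have hp2 : (1:ℕ) ≤ p^2 := Nat.one_le_pow _ _ (by omega)
  have htC : ((t:ℕ):ℂ) = ((p:ℂ)^2 - 1)/12 := by
    have hnat : (p:ℕ)^2 = 12*t + 1 := by omega
    have : ((p:ℂ))^2 = 12*(t:ℂ) + 1 := by
      have := congrArg (fun n : ℕ => (n:ℂ)) hnat
      push_cast at this
      exact this
    rw [this]; ring
  -- polynomials
  set s : Finset ℕ := Icc 1 (p-1) with hs
  set b : ℚ[X] := ∏ k ∈ s, (qnum k)^2 with hb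
  set N : ℚ[X] := ∑ j ∈ s, X^j * ∏ k ∈ s.erase j, (qnum k)^2 with hN
  set Cp : ℚ[X] := (((p^2-1)/12 : ℕ) : ℚ[X]) * (1 - X)^2 with hCp
  set P : ℂ := ∏ k ∈ s, (e k)^2 with hP
  -- the key divisibility
  have haevalb : aeval ζ b = P := by rw [hb, hP, map_prod]; simp [he_def]
  have haevalN : aeval ζ N = ∑ j ∈ s, ζ^j * ∏ k ∈ s.erase j, (e k)^2 := by
    rw [hN, map_sum]
    apply Finset.sum_congr rfl; intro j _
    rw [map_mul, map_prod]
    simp [he_def]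
  have haevalCp : aeval ζ Cp = ((p:ℂ)^2-1)/12 * (1-ζ)^2 := by
    rw [hCp, map_mul, map_pow, map_sub, aeval_X, aeval_one, htq]
    rw [show ((((t:ℕ)) : ℚ[X]) : ℚ[X]) = ((t:ℕ) : ℚ[X]) from rfl]
    rw [aeval_natCast, htC]
  have hkey : aeval ζ (N + Cp * b) = 0 := by
    rw [map_add, map_mul, haevalN, haevalCp, haevalb]
    have hterm : ∀ j ∈ s, ζ^j * ∏ k ∈ s.erase j, (e k)^2
        = ((1-ζ)^2 * (ζ^j/(1-ζ^j)^2)) * P := by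
      intro j hj
      have hprod : (e j)^2 * ∏ k ∈ s.erase j, (e k)^2 = P := by
        rw [hP]; exact Finset.mul_prod_erase s (fun k => (e k)^2) hj
      have hej : e j = (ζ^j - 1)/(ζ - 1) := hEval j hj
      have hejne : e j ≠ 0 := hEne j hj
      have hzj : ζ^j - 1 ≠ 0 := hζk j hj
      have h1mz : 1 - ζ^j ≠ 0 := fun hc => hzj (by linear_combination -hc)
      rw [← hprod, hej]
      field_simp
      ring
    rw [Finset.sum_congr rfl hterm, ← Finset.sum_mul, ← Finset.mul_sum]
    rw [hs, qss_core p hp1 ζ hζ]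
    ring
  have hdvd : qnum p ∣ N + Cp * b := by
    rw [hmin]
    exact minpoly.dvd ℚ ζ hkey
  obtain ⟨a, ha⟩ := hdvd
  -- qnum p does not divide b
  have haeval_p : aeval ζ (qnum p) = 0 := by rw [hmin]; exact minpoly.aeval ℚ ζ
  have hndvd : ¬ (qnum p ∣ b) := by
    intro hd
    have hirr : Irreducible (qnum p) := by
      rw [hcyc]; exact cyclotomic.irreducible_rat (by omega)
    have hprime : Prime (qnum p) := hirr.prime
    obtain ⟨k, hk, hdk⟩ := hprime.exists_mem_finset_dvd (hb ▸ hd)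
    have hdk' : qnum p ∣ qnum k := hprime.dvd_of_dvd_pow hdk
    obtain ⟨c, hc⟩ := hdk'
    have : e k = 0 := by
      rw [he_def]; simp only
      rw [hc, map_mul, haeval_p, zero_mul]
    exact hEne k hk this
  -- now conclude
  refine ⟨a, b, hndvd, ?_⟩
  rw [pow_one, ← ha, add_mul]
  have hΦinj : Function.Injective Φ := RatFunc.algebraMap_injective ℚ
  have hmain : (∑ j ∈ Finset.Icc 1 (p-1), Φ (X^j) / (Φ (qnum j))^2) * Φ b = Φ N := by
    rw [hN, map_sum, Finset.sum_mul]
    apply Finset.sum_congr rfl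
    intro j hj
    have hqj : qnum j ≠ 0 := by
      intro hc
      apply hEne j (hs ▸ hj)
      rw [he_def]; simp only [hc, map_zero]
    have hΦqj : Φ (qnum j) ≠ 0 := fun hc => hqj (hΦinj (by rw [hc, map_zero]))
    have hprod : b = (qnum j)^2 * ∏ k ∈ s.erase j, (qnum k)^2 := by
      rw [hb]; exact (Finset.mul_prod_erase s (fun k => (qnum k)^2) (hs ▸ hj)).symm
    rw [hprod]
    simp only [map_mul, map_pow]
    field_simp
  rw [hmain, map_add]
  simp only [hCp, map_mul]
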